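/- Let (Ω, 𝒜) be a measurable space and let K be the set of probability measures on (Ω, 𝒜). Let M̂, N̂ : B(ℝ) → F(Ω) be maps into the measurable functions Ω → [0,1] satisfying M̂(ℝ) = 1, N̂(ℝ) = 1 and countable additivity pointwise: M̂(⋃ A_i)(ω) = ∑ M̂(A_i)(ω) for disjoint Borel sets A_i and all ω (similarly for N̂). Then the fuzzy observables M(μ)(A) = ∫ M̂(A) dμ and N(μ)(A) = ∫ N̂(A) dμ are compatible: the 2-dimensional observable M̃ determined by M̃(μ)(A × B) = ∫ M̂(A)·N̂(B) dμ is a joint observable for M and N. -/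

import Mathlib

open MeasureTheory
open scoped ENNReal

/-- An (`α`-valued) observable on the probabilistic theory `K` of all Borel
probability measures on a measurable space `Ω`: a σ-affine map sending
probability measures on `Ω` to Borel probability measures on `α`.  Taking
`α = ℝ` gives ordinary (1-dimensional) observables, and `α = ℝ × ℝ` gives
2-dimensional observables. -/
structure CObservable (Ω : Type*) [MeasurableSpace Ω] (α : Type*)
    [MeasurableSpace α] where
  toFun : Measure Ω → Measure α
  prob : ∀ μ : Measure Ω, IsProbabilityMeasure μ → IsProbabilityMeasure (toFun μ)
  sigmaAffine : ∀ (lam : ℕ → ℝ≥0∞) (μs : ℕ → Measure Ω),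
    (∀ i, IsProbabilityMeasure (μs i)) → (∑' i, lam i) = 1 →
    ∀ A : Set α, MeasurableSet A →
      toFun (Measure.sum fun i => lam i • μs i) A = ∑' i, lam i * toFun (μs i) A

section Aux
variable {Ω : Type*} [MeasurableSpace Ω]

lemma fuzzy_empty_zero (Fhat : Set ℝ → Ω → ℝ)
    (hadd : ∀ (A : ℕ → Set ℝ), (∀ i, MeasurableSet (A i)) →
      Pairwise (Function.onFun Disjoint A) →
      ∀ ω : Ω, HasSum (fun i => Fhat (A i) ω) (Fhat (⋃ i, A i) ω)) (ω : Ω) :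
    Fhat ∅ ω = 0 := by
  have h := hadd (fun _ => ∅) (fun _ => MeasurableSet.empty)
    (fun i j _ => by simp [Function.onFun]) ω
  simp only [Set.iUnion_empty] at h
  exact tendsto_nhds_unique tendsto_const_nhds h.summable.tendsto_atTop_zero

noncomputable def fuzzyMeasure (Fhat : Set ℝ → Ω → ℝ)
    (hrange : ∀ (A : Set ℝ) (ω : Ω), MeasurableSet A → Fhat A ω ∈ Set.Icc (0 : ℝ) 1)
    (hadd : ∀ (A : ℕ → Set ℝ), (∀ i, MeasurableSet (A i)) →
      Pairwise (Function.onFun Disjoint A) →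
      ∀ ω : Ω, HasSum (fun i => Fhat (A i) ω) (Fhat (⋃ i, A i) ω)) (ω : Ω) :
    Measure ℝ :=
  Measure.ofMeasurable (fun A _ => ENNReal.ofReal (Fhat A ω))
    (by simp [fuzzy_empty_zero Fhat hadd ω])
    (fun f hf hd => by
      have h := hadd f hf hd ω
      rw [← h.tsum_eq,
        ENNReal.ofReal_tsum_of_nonneg (fun i => (hrange (f i) ω (hf i)).1) h.summable])

lemma fuzzyMeasure_apply (Fhat : Set ℝ → Ω → ℝ) (hrange) (hadd) (ω : Ω)
    {A : Set ℝ} (hA : MeasurableSet A) :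
    fuzzyMeasure Fhat hrange hadd ω A = ENNReal.ofReal (Fhat A ω) :=
  Measure.ofMeasurable_apply A hA

noncomputable def fuzzyKernel (Fhat : Set ℝ → Ω → ℝ)
    (hmeas : ∀ A : Set ℝ, MeasurableSet A → Measurable (Fhat A))
    (hrange : ∀ (A : Set ℝ) (ω : Ω), MeasurableSet A → Fhat A ω ∈ Set.Icc (0 : ℝ) 1)
    (hadd : ∀ (A : ℕ → Set ℝ), (∀ i, MeasurableSet (A i)) →
      Pairwise (Function.onFun Disjoint A) →
      ∀ ω : Ω, HasSum (fun i => Fhat (A i) ω) (Fhat (⋃ i, A i) ω)) :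
    ProbabilityTheory.Kernel Ω ℝ :=
  ⟨fuzzyMeasure Fhat hrange hadd,
    Measure.measurable_of_measurable_coe _ (fun s hs => by
      simp only [fuzzyMeasure_apply Fhat hrange hadd _ hs]
      exact ENNReal.measurable_ofReal.comp (hmeas s hs))⟩

lemma fuzzyKernel_apply (Fhat : Set ℝ → Ω → ℝ) (hmeas) (hrange) (hadd) (ω : Ω)
    {A : Set ℝ} (hA : MeasurableSet A)
    (hone : ∀ ω : Ω, Fhat Set.univ ω = 1) :
    fuzzyKernel Fhat hmeas hrange hadd ω A = ENNReal.ofReal (Fhat A ω) :=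
  fuzzyMeasure_apply Fhat hrange hadd ω hA

theorem fuzzyKernel_markov (Fhat : Set ℝ → Ω → ℝ) (hmeas) (hrange) (hadd)
    (hone : ∀ ω : Ω, Fhat Set.univ ω = 1) :
    ProbabilityTheory.IsMarkovKernel (fuzzyKernel Fhat hmeas hrange hadd) :=
  ⟨fun ω => ⟨by
    rw [show (fuzzyKernel Fhat hmeas hrange hadd) ω Set.univ
        = ENNReal.ofReal (Fhat Set.univ ω) from
      fuzzyMeasure_apply Fhat hrange hadd ω MeasurableSet.univ, hone ω]
    simp⟩⟩
end Aux

section Joint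
variable {Ω : Type*} [MeasurableSpace Ω]

open ProbabilityTheory in
noncomputable def jointObs (κ : Kernel Ω (ℝ × ℝ)) [IsMarkovKernel κ] :
    CObservable Ω (ℝ × ℝ) where
  toFun μ := μ.bind κ
  prob μ hμ := by
    haveI := hμ
    refine ⟨?_⟩
    rw [Measure.bind_apply MeasurableSet.univ κ.measurable.aemeasurable]
    simp
  sigmaAffine lam μs hprob hsum A hA := by
    rw [Measure.bind_apply hA κ.measurable.aemeasurable, lintegral_sum_measure]
    refine tsum_congr fun i => ?_
    rw [lintegral_smul_measure, Measure.bind_apply hA κ.measurable.aemeasurable, smul_eq_mul]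
end Joint

/-- For classical probability theory on a measurable space
`(Ω, 𝒜)`, any two fuzzy observables `M(μ)(A) = ∫ M̂(A) dμ` and
`N(μ)(A) = ∫ N̂(A) dμ` (where `M̂, N̂` map Borel sets to measurable functions
`Ω → [0,1]`, send `ℝ` to `1`, and are countably additive pointwise) are
compatible: the 2-dimensional observable determined by
`M̃(μ)(A × B) = ∫ M̂(A) · N̂(B) dμ` is a joint observable for `M` and `N`. -/
theorem fuzzy_observables_compatible {Ω : Type*} [MeasurableSpace Ω]
    (Mhat Nhat : Set ℝ → Ω → ℝ)
    (hMmeas : ∀ A : Set ℝ, MeasurableSet A → Measurable (Mhat A))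
    (hNmeas : ∀ A : Set ℝ, MeasurableSet A → Measurable (Nhat A))
    (hMrange : ∀ (A : Set ℝ) (ω : Ω), MeasurableSet A →
      Mhat A ω ∈ Set.Icc (0 : ℝ) 1)
    (hNrange : ∀ (A : Set ℝ) (ω : Ω), MeasurableSet A →
      Nhat A ω ∈ Set.Icc (0 : ℝ) 1)
    (hMone : ∀ ω : Ω, Mhat Set.univ ω = 1)
    (hNone : ∀ ω : Ω, Nhat Set.univ ω = 1)
    (hMadd : ∀ (A : ℕ → Set ℝ), (∀ i, MeasurableSet (A i)) →
      Pairwise (Function.onFun Disjoint A) →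
      ∀ ω : Ω, HasSum (fun i => Mhat (A i) ω) (Mhat (⋃ i, A i) ω))
    (hNadd : ∀ (A : ℕ → Set ℝ), (∀ i, MeasurableSet (A i)) →
      Pairwise (Function.onFun Disjoint A) →
      ∀ ω : Ω, HasSum (fun i => Nhat (A i) ω) (Nhat (⋃ i, A i) ω))
    (M N : CObservable Ω ℝ)
    (hM : ∀ μ : Measure Ω, IsProbabilityMeasure μ →
      ∀ A : Set ℝ, MeasurableSet A →
        M.toFun μ A = ENNReal.ofReal (∫ ω, Mhat A ω ∂μ))
    (hN : ∀ μ : Measure Ω, IsProbabilityMeasure μ →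
      ∀ A : Set ℝ, MeasurableSet A →
        N.toFun μ A = ENNReal.ofReal (∫ ω, Nhat A ω ∂μ)) :
    ∃ J : CObservable Ω (ℝ × ℝ),
      (∀ μ : Measure Ω, IsProbabilityMeasure μ →
        ∀ A B : Set ℝ, MeasurableSet A → MeasurableSet B →
          J.toFun μ (A ×ˢ B) = ENNReal.ofReal (∫ ω, Mhat A ω * Nhat B ω ∂μ)) ∧
      (∀ μ : Measure Ω, IsProbabilityMeasure μ →
        ∀ A : Set ℝ, MeasurableSet A →
          J.toFun μ (A ×ˢ (Set.univ : Set ℝ)) = M.toFun μ A ∧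
          J.toFun μ ((Set.univ : Set ℝ) ×ˢ A) = N.toFun μ A) := by
  classical
  set κM := fuzzyKernel Mhat hMmeas hMrange hMadd with hκM
  set κN := fuzzyKernel Nhat hNmeas hNrange hNadd with hκN
  haveI : ProbabilityTheory.IsMarkovKernel κM := fuzzyKernel_markov _ _ _ _ hMone
  haveI : ProbabilityTheory.IsMarkovKernel κN := fuzzyKernel_markov _ _ _ _ hNone
  set κ := κM.prod κN with hκ
  -- key rectangle computation
  have key : ∀ μ : Measure Ω, IsProbabilityMeasure μ →
      ∀ A B : Set ℝ, MeasurableSet A → MeasurableSet B →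
      (jointObs κ).toFun μ (A ×ˢ B) = ENNReal.ofReal (∫ ω, Mhat A ω * Nhat B ω ∂μ) := by
    intro μ hμ A B hA hB
    haveI := hμ
    have hint : Integrable (fun ω => Mhat A ω * Nhat B ω) μ := by
      refine ⟨((hMmeas A hA).mul (hNmeas B hB)).aestronglyMeasurable,
        HasFiniteIntegral.of_bounded (C := 1) (Filter.Eventually.of_forall fun ω => ?_)⟩
      have h1 := hMrange A ω hA
      have h2 := hNrange B ω hB
      rw [Real.norm_eq_abs, abs_of_nonneg (mul_nonneg h1.1 h2.1)]
      exact mul_le_one₀ h1.2 h2.1 h2.2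
    rw [ofReal_integral_eq_lintegral_ofReal hint
      (Filter.Eventually.of_forall fun ω =>
        mul_nonneg (hMrange A ω hA).1 (hNrange B ω hB).1)]
    show (μ.bind κ) (A ×ˢ B) = _
    rw [Measure.bind_apply (hA.prod hB) κ.measurable.aemeasurable]
    refine lintegral_congr fun ω => ?_
    rw [hκ, ProbabilityTheory.Kernel.prod_apply, Measure.prod_prod,
      fuzzyKernel_apply Mhat hMmeas hMrange hMadd ω hA hMone,
      fuzzyKernel_apply Nhat hNmeas hNrange hNadd ω hB hNone,
      ← ENNReal.ofReal_mul (hMrange A ω hA).1]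
  refine ⟨jointObs κ, key, fun μ hμ A hA => ?_⟩
  constructor
  · rw [key μ hμ A Set.univ hA MeasurableSet.univ, hM μ hμ A hA]
    congr 1
    refine integral_congr_ae (Filter.Eventually.of_forall fun ω => ?_)
    simp [hNone ω]
  · rw [key μ hμ Set.univ A MeasurableSet.univ hA, hN μ hμ A hA]
    congr 1
    refine integral_congr_ae (Filter.Eventually.of_forall fun ω => ?_)
    simp [hMone ω]
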